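/- Let α be a finite type and σ : Equiv.Perm α a permutation. The number of finsets s : Finset α with s.image σ = s equals 2 ^ c, where c is the total number of cycles of σ (counting fixed points as cycles of length 1), i.e., c = σ.cycleType.card + (number of fixed points of σ). -/

import Mathlib

open Equiv Equiv.Perm Finset

section Aux

variable {α : Type*} [Fintype α] [DecidableEq α] (σ : Equiv.Perm α)

omit [Fintype α] in
private lemma mem_of_sameCycle {s : Finset α} (hs : s.image σ = s) :
    ∀ {x y : α}, σ.SameCycle x y → x ∈ s → y ∈ s := by
  have step : ∀ z : α, z ∈ s ↔ σ z ∈ s := by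
    intro z
    constructor
    · intro hz
      rw [← hs]; exact Finset.mem_image_of_mem _ hz
    · intro hz
      rw [← hs] at hz
      obtain ⟨w, hw, hwz⟩ := Finset.mem_image.mp hz
      rwa [σ.injective hwz] at hw
  have key : ∀ (n : ℤ) (z : α), z ∈ s → (σ ^ n) z ∈ s := by
    intro n
    induction n using Int.induction_on with
    | zero => simp
    | succ k ih =>
      intro z hz
      have : (σ ^ ((k : ℤ) + 1)) z = σ ((σ ^ (k : ℤ)) z) := by
        rw [add_comm, zpow_add, zpow_one]; rfl
      rw [this, ← step]
      exact ih z hz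
    | pred k ih =>
      intro z hz
      have h1 : (σ ^ (-(k : ℤ) - 1)) z = σ⁻¹ ((σ ^ (-(k : ℤ))) z) := by
        rw [sub_eq_add_neg, add_comm, zpow_add, zpow_neg_one]; rfl
      have h2 := ih z hz
      rw [h1]
      rw [step (σ⁻¹ ((σ ^ (-(k : ℤ))) z)), Equiv.Perm.coe_inv, Equiv.apply_symm_apply]
      exact h2
  rintro x y ⟨n, rfl⟩ hx
  exact key n x hx

end Aux

/-- For a permutation `σ` of a finite type, the number of `σ`-invariant finsets is
`2 ^ c`, where `c` is the total number of cycles of `σ` (counting fixed points). -/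
theorem stmt_9 {α : Type*} [Fintype α] [DecidableEq α] (σ : Equiv.Perm α) :
    (Finset.univ.filter (fun s : Finset α => s.image σ = s)).card =
      2 ^ (σ.cycleType.card + (Finset.univ.filter (fun x : α => σ x = x)).card) := by
  classical
  set r := Equiv.Perm.SameCycle.setoid σ with hr
  letI : DecidableRel r.r := fun x y => (inferInstance : Decidable (σ.SameCycle x y))
  haveI : DecidableEq (Quotient r) := fun a b =>
    Quotient.recOnSubsingleton₂ a b fun x y =>
      decidable_of_iff (σ.SameCycle x y) (by rw [Quotient.eq]; rfl)
  -- basic facts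
  have fixed_closed : ∀ {x y : α}, σ.SameCycle x y → σ x = x → y = x := by
    rintro x y ⟨n, rfl⟩ hx
    exact zpow_apply_eq_self_of_apply_eq_self hx n
  have out_rel : ∀ x : α, σ.SameCycle x (Quotient.mk r x).out := by
    intro x
    have := (Quotient.mk r x).out_eq
    exact Quotient.exact this.symm
  -- Step 1: the number of invariant finsets equals 2 ^ Fintype.card (Quotient r)
  have step1 : (Finset.univ.filter (fun s : Finset α => s.image σ = s)).card =
      2 ^ Fintype.card (Quotient r) := by
    rw [← Fintype.card_finset, ← Finset.card_univ]
    symm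
    apply Finset.card_bij' (fun (T : Finset (Quotient r)) _ =>
        Finset.univ.filter (fun x : α => Quotient.mk r x ∈ T))
      (fun (s : Finset α) _ => s.image (Quotient.mk r))
    · -- maps into invariant finsets
      intro T _
      rw [Finset.mem_filter]
      refine ⟨Finset.mem_univ _, ?_⟩
      ext y
      simp only [Finset.mem_image, Finset.mem_filter, Finset.mem_univ, true_and]
      constructor
      · rintro ⟨x, hx, rfl⟩
        have : Quotient.mk r (σ x) = Quotient.mk r x := Quotient.sound ⟨-1, by simp⟩
        rwa [this]
      · intro hy
        refine ⟨σ⁻¹ y, ?_, by simp⟩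
        have : Quotient.mk r (σ⁻¹ y) = Quotient.mk r y := Quotient.sound ⟨1, by simp⟩
        rwa [this]
    · intro s _; exact Finset.mem_univ _
    · -- left inverse
      intro T _
      ext q
      induction q using Quotient.ind with
      | _ x =>
        simp only [Finset.mem_image, Finset.mem_filter, Finset.mem_univ, true_and]
        constructor
        · rintro ⟨y, hy, hyx⟩; rwa [hyx] at hy
        · intro h; exact ⟨x, h, rfl⟩
    · -- right inverse
      intro s hs
      rw [Finset.mem_filter] at hs
      ext x
      simp only [Finset.mem_filter, Finset.mem_univ, true_and, Finset.mem_image]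
      constructor
      · rintro ⟨y, hy, hyx⟩
        exact mem_of_sameCycle σ hs.2 (Quotient.exact hyx) hy
      · intro hx; exact ⟨x, hx, rfl⟩
  -- Step 2: count the classes
  have step2 : Fintype.card (Quotient r) =
      σ.cycleType.card + (Finset.univ.filter (fun x : α => σ x = x)).card := by
    have hsplit := Finset.card_filter_add_card_filter_not
      (s := (Finset.univ : Finset (Quotient r))) (p := fun q => σ q.out = q.out)
    rw [Finset.card_univ] at hsplit
    have hfix : (Finset.univ.filter (fun q : Quotient r => σ q.out = q.out)).card =
        (Finset.univ.filter (fun x : α => σ x = x)).card := by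
      apply Finset.card_bij (fun q _ => q.out)
      · intro q hq
        rw [Finset.mem_filter] at hq ⊢
        exact ⟨Finset.mem_univ _, hq.2⟩
      · intro q _ q' _ h
        rw [← q.out_eq, ← q'.out_eq, h]
      · intro x hx
        rw [Finset.mem_filter] at hx
        have hout : (Quotient.mk r x).out = x := (fixed_closed (out_rel x) hx.2)
        refine ⟨Quotient.mk r x, ?_, hout⟩
        rw [Finset.mem_filter, hout]
        exact ⟨Finset.mem_univ _, hx.2⟩
    have hcyc : (Finset.univ.filter (fun q : Quotient r => ¬ σ q.out = q.out)).card =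
        σ.cycleFactorsFinset.card := by
      apply Finset.card_bij (fun q _ => σ.cycleOf q.out)
      · intro q hq
        rw [Finset.mem_filter] at hq
        exact Equiv.Perm.cycleOf_mem_cycleFactorsFinset_iff.mpr
          (Equiv.Perm.mem_support.mpr hq.2)
      · intro q hq q' hq' h
        rw [Finset.mem_filter] at hq hq'
        have : q'.out ∈ (σ.cycleOf q.out).support := by
          rw [h]
          exact Equiv.Perm.mem_support_cycleOf_iff.mpr
            ⟨Equiv.Perm.SameCycle.refl _ _, Equiv.Perm.mem_support.mpr hq'.2⟩
        have hsc : σ.SameCycle q.out q'.out :=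
          (Equiv.Perm.mem_support_cycleOf_iff.mp this).1
        rw [← q.out_eq, ← q'.out_eq]
        exact Quotient.sound hsc
      · intro c hc
        have hc' := Equiv.Perm.mem_cycleFactorsFinset_iff.mp hc
        obtain ⟨x, hx⟩ := hc'.1.nonempty_support
        have hσx : σ x ≠ x := by
          have := hc'.2 x hx
          rw [← this]
          exact Equiv.Perm.mem_support.mp hx
        refine ⟨Quotient.mk r x, ?_, ?_⟩
        · rw [Finset.mem_filter]
          refine ⟨Finset.mem_univ _, ?_⟩
          intro hfix'
          have hxo : x = (Quotient.mk r x).out := fixed_closed (out_rel x).symm hfix'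
          exact hσx (by rw [hxo]; exact hfix')
        · have h1 : σ.cycleOf (Quotient.mk r x).out = σ.cycleOf x :=
            ((out_rel x).symm.cycleOf_eq)
          rw [h1, ← Equiv.Perm.cycle_is_cycleOf hx hc]
    have hct : σ.cycleType.card = σ.cycleFactorsFinset.card := by
      rw [Equiv.Perm.cycleType_def, Multiset.card_map]; rfl
    omega
  rw [step1, step2]
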